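/- Assume r ≥ 3. Fix indices 1 ≤ j₁ < j₂ < j₃ ≤ r and a subset J ⊆ {1,…,r}\{j₁, j₂, j₃}, and set α := e_{j₁} + e_{j₂} + e_{j₃} + 2·Σ_{j∈J} e_j + 2e_{r+1} and β := Σ_{j∈J} e_j + e_{r+1}. Let w_α := w_{j₁}∘w_{j₂}∘w_{j₃}∘w_{r+1}∘Π_{j∈J} w_j ∈ W (the factors w_j for j ∈ J pairwise commute). Then: (i) w_α(α) = e_{r+1}; and (ii) the set of positive real roots γ such that w_α(γ) is a negative real root is exactly {e_j : j ∈ J} ∪ {β, β + e_{j₁}, β + e_{j₂}, β + e_{j₃}}, a set with |J| + 4 elements. -/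

import Mathlib

open Finset

/-- The fundamental reflection `w_i` as a function on `ℤ^{r+1}`. -/
def wFun (r : ℕ) (i : Fin (r + 1)) (k : Fin (r + 1) → ℤ) : Fin (r + 1) → ℤ :=
  fun j =>
    if j = i then
      if i = Fin.last r then (∑ l : Fin r, k l.castSucc) - k (Fin.last r)
      else k (Fin.last r) - k i
    else k j

lemma wFun_apply_ne (r : ℕ) (i : Fin (r + 1)) (k : Fin (r + 1) → ℤ) {j : Fin (r + 1)}
    (h : j ≠ i) : wFun r i k j = k j := by
  simp [wFun, h]

lemma wFun_involutive (r : ℕ) (i : Fin (r + 1)) : Function.Involutive (wFun r i) := by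
  intro k
  funext j
  by_cases hj : j = i
  · subst hj
    by_cases hl : j = Fin.last r
    · subst hl
      have h1 : ∀ l : Fin r, wFun r (Fin.last r) k l.castSucc = k l.castSucc := fun l =>
        wFun_apply_ne _ _ _ (Fin.castSucc_lt_last l).ne
      have h0 : wFun r (Fin.last r) k (Fin.last r)
          = (∑ l : Fin r, k l.castSucc) - k (Fin.last r) := by
        simp [wFun]
      have h2 : wFun r (Fin.last r) (wFun r (Fin.last r) k) (Fin.last r)
          = (∑ l : Fin r, wFun r (Fin.last r) k l.castSucc)
              - wFun r (Fin.last r) k (Fin.last r) := by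
        simp [wFun]
      rw [h2, h0]
      simp only [h1]
      ring
    · have hlast : Fin.last r ≠ j := fun h => hl h.symm
      have h1 : wFun r j k (Fin.last r) = k (Fin.last r) := wFun_apply_ne _ _ _ hlast
      have h0 : wFun r j k j = k (Fin.last r) - k j := by
        simp [wFun, hl]
      have h2 : wFun r j (wFun r j k) j
          = wFun r j k (Fin.last r) - wFun r j k j := by
        simp [wFun, hl]
      rw [h2, h1, h0]
      ring
  · rw [wFun_apply_ne _ _ _ hj, wFun_apply_ne _ _ _ hj]

/-- The fundamental reflection `w_i` as a permutation of `ℤ^{r+1}`. -/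
def wRefl (r : ℕ) (i : Fin (r + 1)) : Equiv.Perm (Fin (r + 1) → ℤ) :=
  (wFun_involutive r i).toPerm

/-- The Weyl group `W = ⟨w₁, …, w_{r+1}⟩`. -/
def weylW (r : ℕ) : Subgroup (Equiv.Perm (Fin (r + 1) → ℤ)) :=
  Subgroup.closure (Set.range fun i : Fin (r + 1) => wRefl r i)

/-- The set of real roots `Δ^{re} = W·{e₁, …, e_{r+1}}`. -/
def realRoots (r : ℕ) : Set (Fin (r + 1) → ℤ) :=
  {α | ∃ w ∈ weylW r, ∃ i : Fin (r + 1), α = w (Pi.single i 1)}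

-- basic coordinate lemmas
lemma wRefl_apply (r : ℕ) (i : Fin (r+1)) (k : Fin (r+1) → ℤ) : wRefl r i k = wFun r i k := rfl

lemma castSucc_ne_last {r : ℕ} (t : Fin r) : (t.castSucc : Fin (r+1)) ≠ Fin.last r :=
  (Fin.castSucc_lt_last t).ne

lemma wFun_castSucc_self (r : ℕ) (t : Fin r) (k : Fin (r + 1) → ℤ) :
    wFun r t.castSucc k t.castSucc = k (Fin.last r) - k t.castSucc := by
  simp [wFun, castSucc_ne_last t]

lemma wFun_last_self (r : ℕ) (k : Fin (r + 1) → ℤ) :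
    wFun r (Fin.last r) k (Fin.last r) = (∑ l : Fin r, k l.castSucc) - k (Fin.last r) := by
  simp [wFun]

lemma wCommute (r : ℕ) (i j : Fin r) : Commute (wRefl r i.castSucc) (wRefl r j.castSucc) := by
  rcases eq_or_ne i j with rfl | hij
  · exact Commute.refl _
  · have hij' : (i.castSucc : Fin (r+1)) ≠ j.castSucc := by
      simpa [Fin.castSucc_inj] using hij
    ext k : 1
    simp only [Equiv.Perm.mul_apply, wRefl_apply]
    have hji' := hij'.symm
    funext l
    rcases eq_or_ne l i.castSucc with rfl | hi
    · rw [wFun_castSucc_self, wFun_apply_ne _ _ _ hij', wFun_apply_ne _ _ _ (castSucc_ne_last j).symm, wFun_apply_ne _ _ _ hij', wFun_castSucc_self]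
    · rcases eq_or_ne l j.castSucc with rfl | hj
      · rw [wFun_apply_ne _ _ _ hji', wFun_castSucc_self, wFun_castSucc_self, wFun_apply_ne _ _ _ (castSucc_ne_last i).symm, wFun_apply_ne _ _ _ hji']
      · rw [wFun_apply_ne _ _ _ hi, wFun_apply_ne _ _ _ hj, wFun_apply_ne _ _ _ hj, wFun_apply_ne _ _ _ hi]

lemma prodList_apply (r : ℕ) (L : List (Fin r)) (hL : L.Nodup) (k : Fin (r+1) → ℤ) :
    ∀ l : Fin (r+1), ((L.map fun j => wRefl r j.castSucc).prod) k l =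
      if l ∈ L.map Fin.castSucc then k (Fin.last r) - k l else k l := by
  induction L with
  | nil => simp
  | cons a L ih =>
    intro l
    have ha : a ∉ L := (List.nodup_cons.mp hL).1
    have hL' : L.Nodup := (List.nodup_cons.mp hL).2
    have hlast : (Fin.last r) ∉ L.map Fin.castSucc := by
      simp only [List.mem_map]
      rintro ⟨t, -, ht⟩
      exact castSucc_ne_last t ht
    have hPlast : ((L.map fun j => wRefl r j.castSucc).prod) k (Fin.last r) = k (Fin.last r) := by
      rw [ih hL' (Fin.last r)]; simp [hlast]
    simp only [List.map_cons, List.prod_cons, Equiv.Perm.mul_apply, wRefl_apply]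
    rcases eq_or_ne l a.castSucc with rfl | hla
    · rw [wFun_castSucc_self, hPlast, ih hL' a.castSucc]
      have : (a.castSucc : Fin (r+1)) ∉ L.map Fin.castSucc := by
        simp only [List.mem_map]
        rintro ⟨t, htL, ht⟩
        rw [Fin.castSucc_inj] at ht
        exact ha (ht ▸ htL)
      simp [this]
    · rw [wFun_apply_ne _ _ _ hla, ih hL' l]
      have : (l ∈ (a :: L).map Fin.castSucc) ↔ l ∈ L.map Fin.castSucc := by
        simp [hla]
      exact (if_congr this rfl rfl).symm

lemma prodJ_apply (r : ℕ) (J : Finset (Fin r)) (k : Fin (r+1) → ℤ) (l : Fin (r+1)) :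
    ((J.toList.map fun j => wRefl r j.castSucc).prod) k l =
      if l ∈ J.image Fin.castSucc then k (Fin.last r) - k l else k l := by
  have h : (l ∈ J.toList.map Fin.castSucc) ↔ l ∈ J.image Fin.castSucc := by
    simp [List.mem_map, Finset.mem_image, Finset.mem_toList]
  rw [prodList_apply r J.toList J.nodup_toList k l, if_congr h rfl rfl]

def qform (r : ℕ) (k : Fin (r+1) → ℤ) : ℤ :=
  (∑ t : Fin r, (k t.castSucc)^2) + (k (Fin.last r))^2
    - k (Fin.last r) * ∑ t : Fin r, k t.castSucc

lemma qform_wFun (r : ℕ) (i : Fin (r+1)) (k : Fin (r+1) → ℤ) :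
    qform r (wFun r i k) = qform r k := by
  rcases Fin.eq_castSucc_or_eq_last i with ⟨t, rfl⟩ | rfl
  · have hother : ∀ s : Fin r, s ≠ t → wFun r t.castSucc k s.castSucc = k s.castSucc := by
      intro s hs
      exact wFun_apply_ne _ _ _ (by simpa [Fin.castSucc_inj] using hs)
    have hlast : wFun r t.castSucc k (Fin.last r) = k (Fin.last r) :=
      wFun_apply_ne _ _ _ (castSucc_ne_last t).symm
    have hsq : ∑ s : Fin r, (wFun r t.castSucc k s.castSucc)^2
        = (k (Fin.last r) - k t.castSucc)^2 + ∑ s ∈ Finset.univ.erase t, (k s.castSucc)^2 := by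
      rw [← Finset.add_sum_erase _ _ (Finset.mem_univ t), wFun_castSucc_self]
      congr 1
      exact Finset.sum_congr rfl fun s hs => by rw [hother s (Finset.mem_erase.mp hs).1]
    have hsum : ∑ s : Fin r, wFun r t.castSucc k s.castSucc
        = (k (Fin.last r) - k t.castSucc) + ∑ s ∈ Finset.univ.erase t, k s.castSucc := by
      rw [← Finset.add_sum_erase _ _ (Finset.mem_univ t), wFun_castSucc_self]
      congr 1
      exact Finset.sum_congr rfl fun s hs => hother s (Finset.mem_erase.mp hs).1
    have hsq' : ∑ s : Fin r, (k s.castSucc)^2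
        = (k t.castSucc)^2 + ∑ s ∈ Finset.univ.erase t, (k s.castSucc)^2 :=
      (Finset.add_sum_erase _ _ (Finset.mem_univ t)).symm
    have hsum' : ∑ s : Fin r, k s.castSucc
        = k t.castSucc + ∑ s ∈ Finset.univ.erase t, k s.castSucc :=
      (Finset.add_sum_erase _ _ (Finset.mem_univ t)).symm
    rw [qform, qform, hsq, hsum, hlast, hsq', hsum']
    ring
  · have hother : ∀ s : Fin r, wFun r (Fin.last r) k s.castSucc = k s.castSucc := fun s =>
      wFun_apply_ne _ _ _ (castSucc_ne_last s)
    rw [qform, qform, wFun_last_self]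
    simp only [hother]
    ring

lemma qform_weyl (r : ℕ) (w : Equiv.Perm (Fin (r+1) → ℤ)) (hw : w ∈ weylW r) :
    ∀ k, qform r (w k) = qform r k := by
  induction hw using Subgroup.closure_induction with
  | mem x hx =>
    obtain ⟨i, rfl⟩ := hx
    intro k
    exact qform_wFun r i k
  | one => intro k; simp
  | mul x y hx hy ihx ihy =>
    intro k
    rw [Equiv.Perm.mul_apply, ihx, ihy]
  | inv x hx ihx =>
    intro k
    have := ihx (x⁻¹ k)
    rw [show x (x⁻¹ k) = k from Equiv.apply_symm_apply x k] at this
    exact this.symm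

lemma qform_single (r : ℕ) (i : Fin (r+1)) : qform r (Pi.single i 1) = 1 := by
  rcases Fin.eq_castSucc_or_eq_last i with ⟨t, rfl⟩ | rfl
  · have h1 : (Pi.single t.castSucc (1:ℤ) : Fin (r+1) → ℤ) (Fin.last r) = 0 :=
      Pi.single_eq_of_ne (castSucc_ne_last t).symm 1
    have h2 : ∀ s : Fin r, (Pi.single t.castSucc (1:ℤ) : Fin (r+1) → ℤ) s.castSucc
        = if s = t then 1 else 0 := by
      intro s; simp [Pi.single_apply, Fin.castSucc_inj]
    rw [qform, h1]
    simp only [h2]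
    simp
  · have h2 : ∀ s : Fin r, (Pi.single (Fin.last r) (1:ℤ) : Fin (r+1) → ℤ) s.castSucc = 0 :=
      fun s => Pi.single_eq_of_ne (castSucc_ne_last s) 1
    rw [qform]
    simp only [h2]
    simp

lemma qform_realRoot (r : ℕ) {γ : Fin (r+1) → ℤ} (h : γ ∈ realRoots r) : qform r γ = 1 := by
  obtain ⟨w, hw, i, rfl⟩ := h
  rw [qform_weyl r w hw, qform_single]

lemma realRoots_smul (r : ℕ) {w : Equiv.Perm (Fin (r+1) → ℤ)} (hw : w ∈ weylW r)
    {γ : Fin (r+1) → ℤ} (h : γ ∈ realRoots r) : w γ ∈ realRoots r := by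
  obtain ⟨w', hw', i, rfl⟩ := h
  exact ⟨w * w', mul_mem hw hw', i, by simp [Equiv.Perm.mul_apply]⟩

lemma int_mul_pred_nonneg (n : ℤ) : 0 ≤ n * (n - 1) := by
  rcases le_or_gt n 0 with h | h
  · have h2 : n - 1 ≤ 0 := by omega
    nlinarith [mul_nonneg (neg_nonneg.2 h) (neg_nonneg.2 h2)]
  · exact mul_nonneg (by omega) (by omega)

lemma walpha_coords (r : ℕ) (j₁ j₂ j₃ : Fin r) (J : Finset (Fin r))
    (hJ1 : j₁ ∉ J) (hJ2 : j₂ ∉ J) (hJ3 : j₃ ∉ J)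
    (h12 : j₁ ≠ j₂) (h13 : j₁ ≠ j₃) (h23 : j₂ ≠ j₃)
    (wα : Equiv.Perm (Fin (r + 1) → ℤ))
    (hwα : wα = wRefl r j₁.castSucc * wRefl r j₂.castSucc * wRefl r j₃.castSucc
              * wRefl r (Fin.last r) * (J.toList.map fun j => wRefl r j.castSucc).prod)
    (k : Fin (r+1) → ℤ) :
    (∀ t ∈ J, wα k t.castSucc = k (Fin.last r) - k t.castSucc) ∧
    (wα k (Fin.last r) = (∑ t : Fin r, k t.castSucc) + J.card * k (Fin.last r)
        - 2 * (∑ t ∈ J, k t.castSucc) - k (Fin.last r)) ∧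
    (wα k j₁.castSucc = (∑ t : Fin r, k t.castSucc) + J.card * k (Fin.last r)
        - 2 * (∑ t ∈ J, k t.castSucc) - k (Fin.last r) - k j₁.castSucc) ∧
    (wα k j₂.castSucc = (∑ t : Fin r, k t.castSucc) + J.card * k (Fin.last r)
        - 2 * (∑ t ∈ J, k t.castSucc) - k (Fin.last r) - k j₂.castSucc) ∧
    (wα k j₃.castSucc = (∑ t : Fin r, k t.castSucc) + J.card * k (Fin.last r)
        - 2 * (∑ t ∈ J, k t.castSucc) - k (Fin.last r) - k j₃.castSucc) ∧
    (∀ t : Fin r, t ∉ J → t ≠ j₁ → t ≠ j₂ → t ≠ j₃ → wα k t.castSucc = k t.castSucc) := by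
  subst hwα
  set M : ℤ := (∑ t : Fin r, k t.castSucc) + J.card * k (Fin.last r)
      - 2 * (∑ t ∈ J, k t.castSucc) - k (Fin.last r) with hM
  have hmem : ∀ s : Fin r, ((s.castSucc : Fin (r+1)) ∈ J.image Fin.castSucc) ↔ s ∈ J := by
    intro s; simp [Finset.mem_image, Fin.castSucc_inj]
  have hlastmem : (Fin.last r) ∉ J.image Fin.castSucc := by
    simp only [Finset.mem_image]
    rintro ⟨t, -, ht⟩
    exact castSucc_ne_last t ht
  set P : Fin (r+1) → ℤ := ((J.toList.map fun j => wRefl r j.castSucc).prod) k with hPdef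
  have hP : ∀ l, P l = if l ∈ J.image Fin.castSucc then k (Fin.last r) - k l else k l :=
    fun l => prodJ_apply r J k l
  have hPlast : P (Fin.last r) = k (Fin.last r) := by rw [hP]; simp [hlastmem]
  have hPcs : ∀ s : Fin r, P s.castSucc = if s ∈ J then k (Fin.last r) - k s.castSucc
      else k s.castSucc := by
    intro s; rw [hP, if_congr (hmem s) rfl rfl]
  have hPsum : ∑ s : Fin r, P s.castSucc = (∑ t : Fin r, k t.castSucc)
      + J.card * k (Fin.last r) - 2 * (∑ t ∈ J, k t.castSucc) := by
    have : ∀ s : Fin r, P s.castSucc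
        = k s.castSucc + (if s ∈ J then k (Fin.last r) - 2 * k s.castSucc else 0) := by
      intro s
      rw [hPcs s]
      by_cases hs : s ∈ J <;> simp [hs] <;> ring
    rw [Finset.sum_congr rfl fun s _ => this s, Finset.sum_add_distrib]
    rw [Finset.sum_ite_mem, Finset.univ_inter, Finset.sum_sub_distrib, Finset.sum_const]
    rw [Finset.mul_sum]
    push_cast
    ring
  set A : Fin (r+1) → ℤ := wFun r (Fin.last r) P with hAdef
  have hAlast : A (Fin.last r) = M := by
    rw [hAdef, wFun_last_self, hPsum, hPlast]
  have hAcs : ∀ s : Fin r, A s.castSucc = P s.castSucc := fun s =>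
    wFun_apply_ne _ _ _ (castSucc_ne_last s)
  set B : Fin (r+1) → ℤ := wFun r j₃.castSucc A with hBdef
  have hBlast : B (Fin.last r) = M := by
    rw [hBdef, wFun_apply_ne _ _ _ (castSucc_ne_last j₃).symm, hAlast]
  have hB3 : B j₃.castSucc = M - k j₃.castSucc := by
    rw [hBdef, wFun_castSucc_self, hAlast, hAcs, hPcs]
    simp [hJ3]
  have hBcs : ∀ s : Fin r, s ≠ j₃ → B s.castSucc = P s.castSucc := by
    intro s hs
    rw [hBdef, wFun_apply_ne _ _ _ (by simpa [Fin.castSucc_inj] using hs), hAcs]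
  set C : Fin (r+1) → ℤ := wFun r j₂.castSucc B with hCdef
  have hClast : C (Fin.last r) = M := by
    rw [hCdef, wFun_apply_ne _ _ _ (castSucc_ne_last j₂).symm, hBlast]
  have hC2 : C j₂.castSucc = M - k j₂.castSucc := by
    rw [hCdef, wFun_castSucc_self, hBlast, hBcs j₂ h23, hPcs]
    simp [hJ2]
  have hC3 : C j₃.castSucc = M - k j₃.castSucc := by
    rw [hCdef, wFun_apply_ne _ _ _ (by simpa [Fin.castSucc_inj] using h23.symm), hB3]
  have hCcs : ∀ s : Fin r, s ≠ j₂ → s ≠ j₃ → C s.castSucc = P s.castSucc := by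
    intro s hs2 hs3
    rw [hCdef, wFun_apply_ne _ _ _ (by simpa [Fin.castSucc_inj] using hs2), hBcs s hs3]
  have key : ∀ l, (wRefl r j₁.castSucc * wRefl r j₂.castSucc * wRefl r j₃.castSucc
      * wRefl r (Fin.last r) * (J.toList.map fun j => wRefl r j.castSucc).prod) k l
      = wFun r j₁.castSucc C l := by
    intro l
    simp only [Equiv.Perm.mul_apply, wRefl_apply, ← hPdef, ← hAdef, ← hBdef, ← hCdef]
  refine ⟨?_, ?_, ?_, ?_, ?_, ?_⟩
  · intro t ht
    have ht1 : t ≠ j₁ := fun h => hJ1 (h ▸ ht)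
    have ht2 : t ≠ j₂ := fun h => hJ2 (h ▸ ht)
    have ht3 : t ≠ j₃ := fun h => hJ3 (h ▸ ht)
    rw [key, wFun_apply_ne _ _ _ (by simpa [Fin.castSucc_inj] using ht1), hCcs t ht2 ht3, hPcs]
    simp [ht]
  · rw [key, wFun_apply_ne _ _ _ (castSucc_ne_last j₁).symm, hClast]
  · rw [key, wFun_castSucc_self, hClast, hCcs j₁ h12 h13, hPcs]
    simp [hJ1]
  · rw [key, wFun_apply_ne _ _ _ (by simpa [Fin.castSucc_inj] using h12.symm), hC2]
  · rw [key, wFun_apply_ne _ _ _ (by simpa [Fin.castSucc_inj] using h13.symm), hC3]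
  · intro t htJ ht1 ht2 ht3
    rw [key, wFun_apply_ne _ _ _ (by simpa [Fin.castSucc_inj] using ht1), hCcs t ht2 ht3, hPcs]
    simp [htJ]

lemma single_cs_apply (r : ℕ) (j t : Fin r) :
    (Pi.single j.castSucc (1:ℤ) : Fin (r+1) → ℤ) t.castSucc = if t = j then 1 else 0 := by
  simp [Pi.single_apply, Fin.castSucc_inj]

lemma sum_single_cs (r : ℕ) (j : Fin r) :
    ∑ t : Fin r, (Pi.single j.castSucc (1:ℤ) : Fin (r+1) → ℤ) t.castSucc = 1 := by
  simp only [single_cs_apply]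
  simp

lemma sumJ_single_cs (r : ℕ) (J : Finset (Fin r)) (j : Fin r) :
    ∑ t ∈ J, (Pi.single j.castSucc (1:ℤ) : Fin (r+1) → ℤ) t.castSucc
      = if j ∈ J then 1 else 0 := by
  simp only [single_cs_apply]
  exact Finset.sum_ite_eq' J j (fun _ => 1)

lemma single_last_cs (r : ℕ) (t : Fin r) :
    (Pi.single (Fin.last r) (1:ℤ) : Fin (r+1) → ℤ) t.castSucc = 0 :=
  Pi.single_eq_of_ne (castSucc_ne_last t) 1

lemma sumSingle_apply (r : ℕ) (J : Finset (Fin r)) (l : Fin (r+1)) :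
    (∑ j ∈ J, (Pi.single j.castSucc (1:ℤ) : Fin (r+1) → ℤ)) l
      = if l ∈ J.image Fin.castSucc then 1 else 0 := by
  rw [Finset.sum_apply]
  have : ∀ j ∈ J, (Pi.single j.castSucc (1:ℤ) : Fin (r+1) → ℤ) l
      = if l = j.castSucc then 1 else 0 := by
    intro j _; simp [Pi.single_apply]
  rw [Finset.sum_congr rfl this, ← Finset.sum_image
    (f := fun x => if l = x then (1:ℤ) else 0)
    (g := Fin.castSucc) (by intro x _ y _ h; exact Fin.castSucc_inj.mp h)]
  exact Finset.sum_ite_eq (J.image Fin.castSucc) l (fun _ => 1)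

lemma sumSingle_cs (r : ℕ) (J : Finset (Fin r)) (t : Fin r) :
    (∑ j ∈ J, (Pi.single j.castSucc (1:ℤ) : Fin (r+1) → ℤ)) t.castSucc
      = if t ∈ J then 1 else 0 := by
  rw [sumSingle_apply]
  congr 1
  simp [Finset.mem_image, Fin.castSucc_inj]

lemma sumSingle_last (r : ℕ) (J : Finset (Fin r)) :
    (∑ j ∈ J, (Pi.single j.castSucc (1:ℤ) : Fin (r+1) → ℤ)) (Fin.last r) = 0 := by
  rw [sumSingle_apply]
  simp only [Finset.mem_image]
  have : ¬ ∃ x ∈ J, Fin.castSucc x = Fin.last r := by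
    rintro ⟨t, -, ht⟩; exact castSucc_ne_last t ht
  simp [this]

lemma sum_sumSingle_cs (r : ℕ) (J : Finset (Fin r)) :
    ∑ t : Fin r, (∑ j ∈ J, (Pi.single j.castSucc (1:ℤ) : Fin (r+1) → ℤ)) t.castSucc
      = J.card := by
  simp only [sumSingle_cs]
  simp

lemma sumJ_sumSingle_cs (r : ℕ) (J : Finset (Fin r)) :
    ∑ t ∈ J, (∑ j ∈ J, (Pi.single j.castSucc (1:ℤ) : Fin (r+1) → ℤ)) t.castSucc
      = J.card := by
  rw [Finset.sum_congr rfl fun t ht => by rw [sumSingle_cs, if_pos ht]]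
  simp

lemma single_cs_last (r : ℕ) (j : Fin r) :
    (Pi.single j.castSucc (1:ℤ) : Fin (r+1) → ℤ) (Fin.last r) = 0 :=
  Pi.single_eq_of_ne (castSucc_ne_last j).symm 1

lemma single_nonneg' (r : ℕ) (i : Fin (r+1)) (l : Fin (r+1)) :
    0 ≤ (Pi.single i (1:ℤ) : Fin (r+1) → ℤ) l := by
  rw [Pi.single_apply]; split <;> norm_num

set_option maxHeartbeats 1000000

/-- For `α = e_{j₁} + e_{j₂} + e_{j₃} + 2∑_{j∈J} e_j + 2e_{r+1} ∈ Φ₂` and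
`w_α = w_{j₁} w_{j₂} w_{j₃} w_{r+1} ∏_{j∈J} w_j` (the factors `w_j`, `j ∈ J`, pairwise
commute), one has `w_α(α) = e_{r+1}`, and the set of positive real roots sent by `w_α` to
negative real roots is exactly `{e_j : j ∈ J} ∪ {β, β + e_{j₁}, β + e_{j₂}, β + e_{j₃}}`
where `β = ∑_{j∈J} e_j + e_{r+1}`, a set with `|J| + 4` elements. -/
theorem walpha_inversions (r : ℕ) (hr : 3 ≤ r) (j₁ j₂ j₃ : Fin r)
    (h12 : j₁ < j₂) (h23 : j₂ < j₃)
    (J : Finset (Fin r)) (hJ1 : j₁ ∉ J) (hJ2 : j₂ ∉ J) (hJ3 : j₃ ∉ J)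
    (α β : Fin (r + 1) → ℤ)
    (hα : α = Pi.single j₁.castSucc 1 + Pi.single j₂.castSucc 1 + Pi.single j₃.castSucc 1
            + (2 : ℤ) • (∑ j ∈ J, Pi.single j.castSucc (1 : ℤ))
            + (2 : ℤ) • Pi.single (Fin.last r) (1 : ℤ))
    (hβ : β = (∑ j ∈ J, Pi.single j.castSucc (1 : ℤ)) + Pi.single (Fin.last r) (1 : ℤ))
    (wα : Equiv.Perm (Fin (r + 1) → ℤ))
    (hwα : wα = wRefl r j₁.castSucc * wRefl r j₂.castSucc * wRefl r j₃.castSucc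
              * wRefl r (Fin.last r) * (J.toList.map fun j => wRefl r j.castSucc).prod) :
    (∀ i ∈ J, ∀ j ∈ J, Commute (wRefl r i.castSucc) (wRefl r j.castSucc)) ∧
    wα α = Pi.single (Fin.last r) 1 ∧
    {γ : Fin (r + 1) → ℤ | (γ ∈ realRoots r ∧ ∀ j, 0 ≤ γ j) ∧
        (wα γ ∈ realRoots r ∧ ∀ j, wα γ j ≤ 0)} =
      ((fun j : Fin r => (Pi.single j.castSucc 1 : Fin (r + 1) → ℤ)) '' ↑J) ∪
        {β, β + Pi.single j₁.castSucc 1, β + Pi.single j₂.castSucc 1,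
          β + Pi.single j₃.castSucc 1} ∧
    (((fun j : Fin r => (Pi.single j.castSucc 1 : Fin (r + 1) → ℤ)) '' ↑J) ∪
        {β, β + Pi.single j₁.castSucc 1, β + Pi.single j₂.castSucc 1,
          β + Pi.single j₃.castSucc 1}).ncard = J.card + 4 := by
  have h12' : j₁ ≠ j₂ := h12.ne
  have h13' : j₁ ≠ j₃ := (h12.trans h23).ne
  have h23' : j₂ ≠ j₃ := h23.ne
  have hco := fun k => walpha_coords r j₁ j₂ j₃ J hJ1 hJ2 hJ3 h12' h13' h23' wα hwα k
  -- coordinates of β and α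
  have hβcs : ∀ t : Fin r, β t.castSucc = if t ∈ J then 1 else 0 := by
    intro t
    rw [hβ, Pi.add_apply, sumSingle_cs, single_last_cs, add_zero]
  have hβlast : β (Fin.last r) = 1 := by
    rw [hβ, Pi.add_apply, sumSingle_last, Pi.single_eq_same, zero_add]
  have hαcs : ∀ t : Fin r, α t.castSucc = (if t = j₁ then 1 else 0) + (if t = j₂ then 1 else 0)
      + (if t = j₃ then 1 else 0) + 2 * (if t ∈ J then 1 else 0) := by
    intro t
    rw [hα]
    simp only [Pi.add_apply, Pi.smul_apply, smul_eq_mul, single_cs_apply, sumSingle_cs,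
      single_last_cs]
    ring
  have hαlast : α (Fin.last r) = 2 := by
    rw [hα]
    simp only [Pi.add_apply, Pi.smul_apply, smul_eq_mul, sumSingle_last, Pi.single_eq_same,
      single_cs_last]
    ring
  -- wα lies in the Weyl group
  have hwαW : wα ∈ weylW r := by
    have hgen : ∀ i : Fin (r+1), wRefl r i ∈ weylW r := fun i =>
      Subgroup.subset_closure ⟨i, rfl⟩
    rw [hwα]
    refine mul_mem (mul_mem (mul_mem (mul_mem (hgen _) (hgen _)) (hgen _)) (hgen _)) ?_
    refine list_prod_mem ?_
    intro x hx
    simp only [List.mem_map] at hx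
    obtain ⟨t, -, rfl⟩ := hx
    exact hgen _
  -- sums for β and α
  have hSβ : ∑ t : Fin r, β t.castSucc = J.card := by
    rw [hβ]
    simp only [Pi.add_apply, Finset.sum_add_distrib, sum_sumSingle_cs]
    simp [single_last_cs]
  have hSJβ : ∑ t ∈ J, β t.castSucc = J.card := by
    rw [Finset.sum_congr rfl fun t ht => by rw [hβcs t, if_pos ht]]
    simp
  have hSα : ∑ t : Fin r, α t.castSucc = 3 + 2 * J.card := by
    rw [Finset.sum_congr rfl fun t (_ : t ∈ Finset.univ) => hαcs t]
    simp only [Finset.sum_add_distrib, Finset.sum_ite_eq' Finset.univ, ← Finset.mul_sum,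
      Finset.sum_boole]
    simp [Finset.filter_mem_eq_inter]
  have hSJα : ∑ t ∈ J, α t.castSucc = 2 * J.card := by
    rw [Finset.sum_congr rfl fun t (ht : t ∈ J) => by
      rw [hαcs t, if_neg (fun h : t = j₁ => hJ1 (h ▸ ht)),
        if_neg (fun h : t = j₂ => hJ2 (h ▸ ht)),
        if_neg (fun h : t = j₃ => hJ3 (h ▸ ht)), if_pos ht]]
    simp
    ring
  refine ⟨fun i _ j _ => wCommute r i j, ?_, ?_, ?_⟩
  · -- wα α = e_{r+1}
    obtain ⟨hA1, hA2, hA3, hA4, hA5, hA6⟩ := hco α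
    funext l
    rcases Fin.eq_castSucc_or_eq_last l with ⟨t, rfl⟩ | rfl
    · rw [single_last_cs]
      by_cases ht1 : t = j₁
      · subst ht1
        rw [hA3, hSα, hSJα, hαlast, hαcs]
        simp [hJ1, h12', h13']
        ring
      · by_cases ht2 : t = j₂
        · subst ht2
          rw [hA4, hSα, hSJα, hαlast, hαcs]
          simp [hJ2, h12'.symm, h23']
          ring
        · by_cases ht3 : t = j₃
          · subst ht3
            rw [hA5, hSα, hSJα, hαlast, hαcs]
            simp [hJ3, h13'.symm, h23'.symm]
            ring
          · by_cases htJ : t ∈ J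
            · rw [hA1 t htJ, hαlast, hαcs]
              simp [htJ, ht1, ht2, ht3]
            · rw [hA6 t htJ ht1 ht2 ht3, hαcs]
              simp [htJ, ht1, ht2, ht3]
    · rw [hA2, hSα, hSJα, hαlast, Pi.single_eq_same]
      push_cast
      ring
  · -- the inversion set
    have hgen : ∀ i : Fin (r+1), wRefl r i ∈ weylW r := fun i =>
      Subgroup.subset_closure ⟨i, rfl⟩
    have hPmem : (J.toList.map fun j => wRefl r j.castSucc).prod ∈ weylW r := by
      refine list_prod_mem ?_
      intro x hx
      simp only [List.mem_map] at hx
      obtain ⟨t, -, rfl⟩ := hx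
      exact hgen _
    have hlastnm : (Fin.last r) ∉ J.image Fin.castSucc := by
      simp only [Finset.mem_image]
      rintro ⟨t, -, ht⟩
      exact castSucc_ne_last t ht
    have hβeq : β = ((J.toList.map fun j => wRefl r j.castSucc).prod)
        (Pi.single (Fin.last r) 1) := by
      funext l
      rw [prodJ_apply]
      rcases Fin.eq_castSucc_or_eq_last l with ⟨s, rfl⟩ | rfl
      · rw [hβcs]
        by_cases hs : s ∈ J
        · rw [if_pos hs, if_pos (Finset.mem_image_of_mem Fin.castSucc hs),
            Pi.single_eq_same, single_last_cs]
          norm_num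
        · rw [if_neg hs, if_neg (by
            simp only [Finset.mem_image, not_exists]
            intro x
            rintro ⟨hx, hx2⟩
            exact hs ((Fin.castSucc_inj.mp hx2) ▸ hx)), single_last_cs]
      · rw [hβlast, if_neg hlastnm, Pi.single_eq_same]
    have hβroot : β ∈ realRoots r := ⟨_, hPmem, Fin.last r, hβeq⟩
    have hβe_eqW : ∀ jx : Fin r, jx ∉ J →
        β + Pi.single jx.castSucc 1 = (wRefl r jx.castSucc) β := by
      intro jx hjx
      funext l
      rw [wRefl_apply]
      rcases eq_or_ne l jx.castSucc with rfl | hl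
      · simp only [Pi.add_apply, wFun_castSucc_self, hβlast, hβcs, Pi.single_eq_same,
          if_neg hjx]
        norm_num
      · rw [wFun_apply_ne _ _ _ hl, Pi.add_apply, Pi.single_eq_of_ne hl, add_zero]
    have hβeroot : ∀ jx : Fin r, jx ∉ J → β + Pi.single jx.castSucc 1 ∈ realRoots r :=
      fun jx hjx => by
        rw [hβe_eqW jx hjx]
        exact realRoots_smul r (hgen _) hβroot
    have hβpos : ∀ l, 0 ≤ β l := by
      intro l
      rcases Fin.eq_castSucc_or_eq_last l with ⟨s, rfl⟩ | rfl
      · rw [hβcs]; split <;> norm_num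
      · rw [hβlast]; norm_num
    have hβepos : ∀ (jx : Fin r) l, 0 ≤ (β + Pi.single jx.castSucc 1 : Fin (r+1) → ℤ) l :=
      fun jx l => add_nonneg (hβpos l) (single_nonneg' r _ l)
    have hβe_cs : ∀ jx s : Fin r, (β + Pi.single jx.castSucc 1 : Fin (r+1) → ℤ) s.castSucc
        = (if s ∈ J then 1 else 0) + (if s = jx then 1 else 0) := by
      intro jx s
      rw [Pi.add_apply, hβcs, single_cs_apply]
    have hβe_last : ∀ jx : Fin r, (β + Pi.single jx.castSucc 1 : Fin (r+1) → ℤ)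
        (Fin.last r) = 1 := by
      intro jx
      rw [Pi.add_apply, hβlast, single_cs_last]
      norm_num
    have hsum_indJ : ∑ s : Fin r, (if s ∈ J then (1:ℤ) else 0) = J.card := by
      rw [Finset.sum_congr rfl fun s _ => (sumSingle_cs r J s).symm, sum_sumSingle_cs]
    have hSβe : ∀ jx : Fin r, ∑ s : Fin r,
        (β + Pi.single jx.castSucc 1 : Fin (r+1) → ℤ) s.castSucc = J.card + 1 := by
      intro jx
      rw [Finset.sum_congr rfl fun s _ => hβe_cs jx s, Finset.sum_add_distrib, hsum_indJ]
      have : ∑ s : Fin r, (if s = jx then (1:ℤ) else 0) = 1 := by simp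
      rw [this]
    have hSJβe : ∀ jx : Fin r, jx ∉ J → ∑ s ∈ J,
        (β + Pi.single jx.castSucc 1 : Fin (r+1) → ℤ) s.castSucc = J.card := by
      intro jx hjx
      rw [Finset.sum_congr rfl fun s hs => by
        rw [hβe_cs jx s, if_pos hs, if_neg (fun h : s = jx => hjx (h ▸ hs))]]
      simp
    have hβneg : ∀ l, wα β l ≤ 0 := by
      obtain ⟨hB1, hB2, hB3, hB4, hB5, hB6⟩ := hco β
      intro l
      rcases Fin.eq_castSucc_or_eq_last l with ⟨s, rfl⟩ | rfl
      · by_cases hsJ : s ∈ J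
        · rw [hB1 s hsJ, hβlast, hβcs, if_pos hsJ]
          norm_num
        · by_cases hs1 : s = j₁
          · subst hs1
            rw [hB3, hSβ, hSJβ, hβlast, hβcs, if_neg hJ1]
            linarith only []
          · by_cases hs2 : s = j₂
            · subst hs2
              rw [hB4, hSβ, hSJβ, hβlast, hβcs, if_neg hJ2]
              linarith only []
            · by_cases hs3 : s = j₃
              · subst hs3
                rw [hB5, hSβ, hSJβ, hβlast, hβcs, if_neg hJ3]
                linarith only []
              · rw [hB6 s hsJ hs1 hs2 hs3, hβcs, if_neg hsJ]
      · rw [hB2, hSβ, hSJβ, hβlast]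
        linarith only []
    have hβeneg : ∀ jx : Fin r, jx ∉ J → (jx = j₁ ∨ jx = j₂ ∨ jx = j₃) →
        ∀ l, wα (β + Pi.single jx.castSucc 1) l ≤ 0 := by
      intro jx hjx hjor l
      obtain ⟨hB1, hB2, hB3, hB4, hB5, hB6⟩ := hco (β + Pi.single jx.castSucc 1)
      rcases Fin.eq_castSucc_or_eq_last l with ⟨s, rfl⟩ | rfl
      · by_cases hsJ : s ∈ J
        · rw [hB1 s hsJ, hβe_last, hβe_cs, if_pos hsJ,
            if_neg (fun h : s = jx => hjx (h ▸ hsJ))]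
          norm_num
        · by_cases hs1 : s = j₁
          · subst hs1
            rw [hB3, hSβe, hSJβe jx hjx, hβe_last, hβe_cs, if_neg hJ1]
            split <;> linarith only []
          · by_cases hs2 : s = j₂
            · subst hs2
              rw [hB4, hSβe, hSJβe jx hjx, hβe_last, hβe_cs, if_neg hJ2]
              split <;> linarith only []
            · by_cases hs3 : s = j₃
              · subst hs3
                rw [hB5, hSβe, hSJβe jx hjx, hβe_last, hβe_cs, if_neg hJ3]
                split <;> linarith only []
              · have hsx : s ≠ jx := by rcases hjor with rfl | rfl | rfl <;> assumption
                rw [hB6 s hsJ hs1 hs2 hs3, hβe_cs, if_neg hsJ, if_neg hsx]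
                norm_num
      · rw [hB2, hSβe, hSJβe jx hjx, hβe_last]
        linarith only []
    ext γ
    simp only [Set.mem_setOf_eq, Set.mem_union, Set.mem_image, Set.mem_insert_iff,
      Set.mem_singleton_iff, Finset.mem_coe]
    constructor
    · rintro ⟨⟨hre, hpos⟩, -, hneg⟩
      obtain ⟨hG1, hG2, hG3, hG4, hG5, hG6⟩ := hco γ
      have hq := qform_realRoot r hre
      unfold qform at hq
      have hzero : ∀ t : Fin r, t ∉ J → t ≠ j₁ → t ≠ j₂ → t ≠ j₃ → γ t.castSucc = 0 := by
        intro t h h1 h2 h3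
        have h' := hneg t.castSucc
        rw [hG6 t h h1 h2 h3] at h'
        exact le_antisymm h' (hpos _)
      have hnot1 : j₁ ∉ insert j₂ (insert j₃ J) := by simp [h12', h13', hJ1]
      have hnot2 : j₂ ∉ insert j₃ J := by simp [h23', hJ2]
      have hsplit : ∀ f : Fin r → ℤ,
          (∀ s : Fin r, s ∉ J → s ≠ j₁ → s ≠ j₂ → s ≠ j₃ → f s = 0) →
          ∑ s : Fin r, f s = f j₁ + f j₂ + f j₃ + ∑ s ∈ J, f s := by
        intro f hf
        rw [← Finset.sum_subset (Finset.subset_univ (insert j₁ (insert j₂ (insert j₃ J))))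
          (fun s _ hs => by
            simp only [Finset.mem_insert] at hs
            push_neg at hs
            exact hf s hs.2.2.2 hs.1 hs.2.1 hs.2.2.1)]
        rw [Finset.sum_insert hnot1, Finset.sum_insert hnot2, Finset.sum_insert hJ3]
        ring
      have hS : ∑ s : Fin r, γ s.castSucc
          = γ j₁.castSucc + γ j₂.castSucc + γ j₃.castSucc + ∑ s ∈ J, γ s.castSucc :=
        hsplit _ hzero
      have hQ : ∑ s : Fin r, γ s.castSucc ^ 2
          = γ j₁.castSucc ^ 2 + γ j₂.castSucc ^ 2 + γ j₃.castSucc ^ 2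
            + ∑ s ∈ J, γ s.castSucc ^ 2 :=
        hsplit (fun s => γ s.castSucc ^ 2) (fun s h a b c => by show γ s.castSucc ^ 2 = 0; rw [hzero s h a b c]; ring)
      rw [hS, hQ] at hq
      have hcJ : ∀ t ∈ J, γ (Fin.last r) ≤ γ t.castSucc := by
        intro t ht
        have h' := hneg t.castSucc
        rw [hG1 t ht] at h'
        linarith only [h']
      have hMle := hneg (Fin.last r)
      rw [hG2, hS] at hMle
      have hm0 : (0:ℤ) ≤ γ (Fin.last r) := hpos _
      have hTnn : 0 ≤ (∑ s ∈ J, γ s.castSucc ^ 2)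
          - γ (Fin.last r) * ∑ s ∈ J, γ s.castSucc := by
        have hexp : (∑ s ∈ J, γ s.castSucc ^ 2) - γ (Fin.last r) * ∑ s ∈ J, γ s.castSucc
            = ∑ s ∈ J, (γ s.castSucc ^ 2 - γ (Fin.last r) * γ s.castSucc) := by
          rw [Finset.sum_sub_distrib, Finset.mul_sum]
        rw [hexp]
        refine Finset.sum_nonneg fun s hs => ?_
        have h1 := hcJ s hs
        have h2 := hpos s.castSucc
        nlinarith only [h1, h2]
      have hm2 : γ (Fin.last r) ≤ 2 := by
        nlinarith only [sq_nonneg (2*γ j₁.castSucc - γ (Fin.last r)),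
          sq_nonneg (2*γ j₂.castSucc - γ (Fin.last r)),
          sq_nonneg (2*γ j₃.castSucc - γ (Fin.last r)), hTnn, hq, hm0]
      have hmc : γ (Fin.last r) = 0 ∨ γ (Fin.last r) = 1 ∨ γ (Fin.last r) = 2 := by omega
      rcases hmc with hm' | hm' | hm'
      · -- m = 0 : γ = e_t for some t ∈ J
        rw [hm'] at hq hMle
        have hq0 : γ j₁.castSucc ^ 2 + γ j₂.castSucc ^ 2 + γ j₃.castSucc ^ 2
            + ∑ s ∈ J, γ s.castSucc ^ 2 = 1 := by linarith only [hq]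
        have hM0 : γ j₁.castSucc + γ j₂.castSucc + γ j₃.castSucc
            ≤ ∑ s ∈ J, γ s.castSucc := by linarith only [hMle]
        have hSJnn : 0 ≤ ∑ s ∈ J, γ s.castSucc := Finset.sum_nonneg fun s _ => hpos _
        have hSJQJ : (∑ s ∈ J, γ s.castSucc) ≤ ∑ s ∈ J, γ s.castSucc ^ 2 :=
          Finset.sum_le_sum fun s _ => by linarith only [int_mul_pred_nonneg (γ s.castSucc)]
        have hk1 : γ j₁.castSucc ≤ γ j₁.castSucc ^ 2 := by
          linarith only [int_mul_pred_nonneg (γ j₁.castSucc)]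
        have hk2 : γ j₂.castSucc ≤ γ j₂.castSucc ^ 2 := by
          linarith only [int_mul_pred_nonneg (γ j₂.castSucc)]
        have hk3 : γ j₃.castSucc ≤ γ j₃.castSucc ^ 2 := by
          linarith only [int_mul_pred_nonneg (γ j₃.castSucc)]
        have ha1z : γ j₁.castSucc = 0 := by
          rcases le_or_gt (γ j₁.castSucc) 0 with h | h
          · linarith only [h, hpos j₁.castSucc]
          · exfalso
            linarith only [h, hq0, hk1, hSJQJ, hM0, sq_nonneg (γ j₂.castSucc),
              sq_nonneg (γ j₃.castSucc), hpos j₂.castSucc, hpos j₃.castSucc]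
        have ha2z : γ j₂.castSucc = 0 := by
          rcases le_or_gt (γ j₂.castSucc) 0 with h | h
          · linarith only [h, hpos j₂.castSucc]
          · exfalso
            linarith only [h, hq0, hk2, hSJQJ, hM0, sq_nonneg (γ j₁.castSucc),
              sq_nonneg (γ j₃.castSucc), hpos j₁.castSucc, hpos j₃.castSucc]
        have ha3z : γ j₃.castSucc = 0 := by
          rcases le_or_gt (γ j₃.castSucc) 0 with h | h
          · linarith only [h, hpos j₃.castSucc]
          · exfalso
            linarith only [h, hq0, hk3, hSJQJ, hM0, sq_nonneg (γ j₁.castSucc),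
              sq_nonneg (γ j₂.castSucc), hpos j₁.castSucc, hpos j₂.castSucc]
        have hQJ1 : ∑ s ∈ J, γ s.castSucc ^ 2 = 1 := by
          rw [ha1z, ha2z, ha3z] at hq0
          linarith only [hq0]
        have hex : ∃ t ∈ J, γ t.castSucc ≠ 0 := by
          by_contra hcon
          push_neg at hcon
          have : ∑ s ∈ J, γ s.castSucc ^ 2 = 0 :=
            Finset.sum_eq_zero fun s hs => by rw [hcon s hs]; ring
          omega
        obtain ⟨t, htJ, htne⟩ := hex
        have hge1 : 1 ≤ γ t.castSucc := by have := hpos t.castSucc; omega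
        have herase : γ t.castSucc ^ 2 + ∑ s ∈ J.erase t, γ s.castSucc ^ 2
            = ∑ s ∈ J, γ s.castSucc ^ 2 := Finset.add_sum_erase J (fun s => γ s.castSucc ^ 2) htJ
        have hrest_nn : 0 ≤ ∑ s ∈ J.erase t, γ s.castSucc ^ 2 :=
          Finset.sum_nonneg fun s _ => sq_nonneg _
        have hcsq : γ t.castSucc ^ 2 ≤ 1 := by linarith only [herase, hrest_nn, hQJ1]
        have hct : γ t.castSucc = 1 := by nlinarith only [hge1, hcsq]
        have hrest0 : ∀ s ∈ J.erase t, γ s.castSucc = 0 := by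
          have h0 : ∑ s ∈ J.erase t, γ s.castSucc ^ 2 = 0 := by
            rw [hct] at herase
            linarith only [herase, hQJ1]
          intro s hs
          have := (Finset.sum_eq_zero_iff_of_nonneg
            fun s _ => sq_nonneg (γ s.castSucc)).1 h0 s hs
          exact pow_eq_zero_iff two_ne_zero |>.1 this
        left
        refine ⟨t, htJ, ?_⟩
        funext l
        show (Pi.single t.castSucc (1:ℤ) : Fin (r+1) → ℤ) l = γ l
        rcases Fin.eq_castSucc_or_eq_last l with ⟨s, rfl⟩ | rfl
        · rw [single_cs_apply]
          by_cases hst : s = t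
          · subst hst; simp [hct]
          · rw [if_neg hst]
            by_cases hsJ : s ∈ J
            · exact (hrest0 s (Finset.mem_erase.2 ⟨hst, hsJ⟩)).symm
            · by_cases hs1 : s = j₁
              · subst hs1; exact ha1z.symm
              · by_cases hs2 : s = j₂
                · subst hs2; exact ha2z.symm
                · by_cases hs3 : s = j₃
                  · subst hs3; exact ha3z.symm
                  · exact (hzero s hsJ hs1 hs2 hs3).symm
        · rw [single_cs_last, hm']
      · -- m = 1 : γ = β or β + e_{j_i}
        rw [hm'] at hq hMle hcJ
        have hka : ∀ x : ℤ, 0 ≤ x ^ 2 - x := fun x => by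
          linarith only [int_mul_pred_nonneg x]
        have hsub : (∑ s ∈ J, (γ s.castSucc ^ 2 - γ s.castSucc))
            = (∑ s ∈ J, γ s.castSucc ^ 2) - ∑ s ∈ J, γ s.castSucc :=
          Finset.sum_sub_distrib _ _
        have hzsum : (∑ s ∈ J, (γ s.castSucc ^ 2 - γ s.castSucc))
            + (γ j₁.castSucc ^ 2 - γ j₁.castSucc) + (γ j₂.castSucc ^ 2 - γ j₂.castSucc)
            + (γ j₃.castSucc ^ 2 - γ j₃.castSucc) = 0 := by
          rw [hsub]; linarith only [hq]
        have hTnn' : 0 ≤ ∑ s ∈ J, (γ s.castSucc ^ 2 - γ s.castSucc) :=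
          Finset.sum_nonneg fun s _ => hka _
        have hT0 : ∑ s ∈ J, (γ s.castSucc ^ 2 - γ s.castSucc) = 0 := by
          linarith only [hzsum, hTnn', hka (γ j₁.castSucc), hka (γ j₂.castSucc),
            hka (γ j₃.castSucc)]
        have hct1 : ∀ t ∈ J, γ t.castSucc = 1 := by
          intro t ht
          have h0 := (Finset.sum_eq_zero_iff_of_nonneg fun s _ => hka (γ s.castSucc)).1
            hT0 t ht
          have h0' : γ t.castSucc ^ 2 - γ t.castSucc = 0 := h0
          have hmul : γ t.castSucc * (γ t.castSucc - 1) = 0 := by linear_combination h0'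
          have := hcJ t ht
          rcases mul_eq_zero.mp hmul with h | h <;> omega
        have ha1' : γ j₁.castSucc = 0 ∨ γ j₁.castSucc = 1 := by
          have h0 : γ j₁.castSucc ^ 2 - γ j₁.castSucc = 0 := by
            linarith only [hzsum, hT0, hka (γ j₁.castSucc), hka (γ j₂.castSucc),
              hka (γ j₃.castSucc)]
          have hmul : γ j₁.castSucc * (γ j₁.castSucc - 1) = 0 := by linear_combination h0
          rcases mul_eq_zero.mp hmul with h | h
          · left; omega
          · right; omega
        have ha2' : γ j₂.castSucc = 0 ∨ γ j₂.castSucc = 1 := by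
          have h0 : γ j₂.castSucc ^ 2 - γ j₂.castSucc = 0 := by
            linarith only [hzsum, hT0, hka (γ j₁.castSucc), hka (γ j₂.castSucc),
              hka (γ j₃.castSucc)]
          have hmul : γ j₂.castSucc * (γ j₂.castSucc - 1) = 0 := by linear_combination h0
          rcases mul_eq_zero.mp hmul with h | h
          · left; omega
          · right; omega
        have ha3' : γ j₃.castSucc = 0 ∨ γ j₃.castSucc = 1 := by
          have h0 : γ j₃.castSucc ^ 2 - γ j₃.castSucc = 0 := by
            linarith only [hzsum, hT0, hka (γ j₁.castSucc), hka (γ j₂.castSucc),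
              hka (γ j₃.castSucc)]
          have hmul : γ j₃.castSucc * (γ j₃.castSucc - 1) = 0 := by linear_combination h0
          rcases mul_eq_zero.mp hmul with h | h
          · left; omega
          · right; omega
        have hSJ1 : ∑ s ∈ J, γ s.castSucc = (J.card : ℤ) := by
          rw [Finset.sum_congr rfl hct1]; simp
        rw [hSJ1] at hMle
        have hasum : γ j₁.castSucc + γ j₂.castSucc + γ j₃.castSucc ≤ 1 := by
          linarith only [hMle]
        have hgeq : ∀ v : Fin (r+1) → ℤ, v (Fin.last r) = 1 →
            (∀ s : Fin r, v s.castSucc = (if s ∈ J then 1 else 0)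
              + (if s = j₁ then γ j₁.castSucc else 0)
              + (if s = j₂ then γ j₂.castSucc else 0)
              + (if s = j₃ then γ j₃.castSucc else 0)) → γ = v := by
          intro v hv1 hv2
          funext l
          rcases Fin.eq_castSucc_or_eq_last l with ⟨s, rfl⟩ | rfl
          · rw [hv2 s]
            by_cases hsJ : s ∈ J
            · have hs1 : s ≠ j₁ := fun h => hJ1 (h ▸ hsJ)
              have hs2 : s ≠ j₂ := fun h => hJ2 (h ▸ hsJ)
              have hs3 : s ≠ j₃ := fun h => hJ3 (h ▸ hsJ)
              rw [if_pos hsJ, if_neg hs1, if_neg hs2, if_neg hs3, hct1 s hsJ]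
              norm_num
            · rw [if_neg hsJ]
              by_cases hs1 : s = j₁
              · subst hs1
                rw [if_pos rfl, if_neg h12', if_neg h13']
                ring
              · by_cases hs2 : s = j₂
                · subst hs2
                  rw [if_neg h12'.symm, if_pos rfl, if_neg h23']
                  ring
                · by_cases hs3 : s = j₃
                  · subst hs3
                    rw [if_neg h13'.symm, if_neg h23'.symm, if_pos rfl]
                    ring
                  · rw [if_neg hs1, if_neg hs2, if_neg hs3, hzero s hsJ hs1 hs2 hs3]
                    ring
          · rw [hv1, hm']
        rcases ha1' with h1 | h1
        · rcases ha2' with h2 | h2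
          · rcases ha3' with h3 | h3
            · -- γ = β
              right; left
              refine hgeq β hβlast ?_
              intro s
              rw [hβcs, h1, h2, h3]
              simp
            · -- γ = β + e₃
              right; right; right; right
              refine hgeq _ (hβe_last j₃) ?_
              intro s
              rw [hβe_cs, h1, h2, h3]
              simp
          · rcases ha3' with h3 | h3
            · -- γ = β + e₂
              right; right; right; left
              refine hgeq _ (hβe_last j₂) ?_
              intro s
              rw [hβe_cs, h1, h2, h3]
              simp
            · exfalso; omega
        · rcases ha2' with h2 | h2
          · rcases ha3' with h3 | h3
            · -- γ = β + e₁
              right; right; left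
              refine hgeq _ (hβe_last j₁) ?_
              intro s
              rw [hβe_cs, h1, h2, h3]
              simp
            · exfalso; omega
          · exfalso; omega
      · -- m = 2 : impossible
        exfalso
        rw [hm'] at hq hMle hcJ
        have hsub2 : ∑ s ∈ J, (γ s.castSucc ^ 2 - 2 * γ s.castSucc)
            = (∑ s ∈ J, γ s.castSucc ^ 2) - 2 * ∑ s ∈ J, γ s.castSucc := by
          rw [Finset.sum_sub_distrib, Finset.mul_sum]
        have hTnn2 : 0 ≤ ∑ s ∈ J, (γ s.castSucc ^ 2 - 2 * γ s.castSucc) :=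
          Finset.sum_nonneg fun s hs => by have := hcJ s hs; nlinarith only [this]
        have hs1 : (γ j₁.castSucc - 1) ^ 2 = 0 := by
          nlinarith only [hq, hTnn2, hsub2, sq_nonneg (γ j₂.castSucc - 1),
            sq_nonneg (γ j₃.castSucc - 1)]
        have hs2 : (γ j₂.castSucc - 1) ^ 2 = 0 := by
          nlinarith only [hq, hTnn2, hsub2, sq_nonneg (γ j₁.castSucc - 1),
            sq_nonneg (γ j₃.castSucc - 1)]
        have hs3 : (γ j₃.castSucc - 1) ^ 2 = 0 := by
          nlinarith only [hq, hTnn2, hsub2, sq_nonneg (γ j₁.castSucc - 1),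
            sq_nonneg (γ j₂.castSucc - 1)]
        have ha1 : γ j₁.castSucc = 1 := by
          have := pow_eq_zero_iff two_ne_zero |>.1 hs1; omega
        have ha2 : γ j₂.castSucc = 1 := by
          have := pow_eq_zero_iff two_ne_zero |>.1 hs2; omega
        have ha3 : γ j₃.castSucc = 1 := by
          have := pow_eq_zero_iff two_ne_zero |>.1 hs3; omega
        have hT20 : ∑ s ∈ J, (γ s.castSucc ^ 2 - 2 * γ s.castSucc) = 0 := by
          rw [ha1, ha2, ha3] at hq
          rw [hsub2]
          linarith only [hq]
        have hc2 : ∀ t ∈ J, γ t.castSucc = 2 := by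
          intro t ht
          have h0 := (Finset.sum_eq_zero_iff_of_nonneg fun s hs => by
            have := hcJ s hs; nlinarith only [this]).1 hT20 t ht
          have h0' : γ t.castSucc ^ 2 - 2 * γ t.castSucc = 0 := h0
          have hmul : γ t.castSucc * (γ t.castSucc - 2) = 0 := by linear_combination h0'
          have := hcJ t ht
          rcases mul_eq_zero.mp hmul with h | h <;> omega
        have hSJ2 : ∑ s ∈ J, γ s.castSucc = 2 * (J.card : ℤ) := by
          rw [Finset.sum_congr rfl hc2]
          simp [mul_comm]
        rw [ha1, ha2, ha3, hSJ2] at hMle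
        linarith only [hMle]
    · rintro (⟨t, htJ, hteq⟩ | h | h | h | h)
      · -- γ = e_t
        have hγ : γ = Pi.single t.castSucc 1 := hteq.symm
        subst hγ
        have hroot : (Pi.single t.castSucc 1 : Fin (r+1) → ℤ) ∈ realRoots r :=
          ⟨1, one_mem _, t.castSucc, rfl⟩
        refine ⟨⟨hroot, fun l => single_nonneg' r t.castSucc l⟩,
          realRoots_smul r hwαW hroot, ?_⟩
        obtain ⟨hB1, hB2, hB3, hB4, hB5, hB6⟩ := hco (Pi.single t.castSucc 1)
        have hst : ∑ s : Fin r, (Pi.single t.castSucc (1:ℤ) : Fin (r+1) → ℤ) s.castSucc = 1 :=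
          sum_single_cs r t
        have hstJ : ∑ s ∈ J, (Pi.single t.castSucc (1:ℤ) : Fin (r+1) → ℤ) s.castSucc = 1 := by
          rw [sumJ_single_cs, if_pos htJ]
        have hlast0 : (Pi.single t.castSucc (1:ℤ) : Fin (r+1) → ℤ) (Fin.last r) = 0 :=
          single_cs_last r t
        intro l
        rcases Fin.eq_castSucc_or_eq_last l with ⟨s, rfl⟩ | rfl
        · by_cases hsJ : s ∈ J
          · rw [hB1 s hsJ, hlast0, single_cs_apply]
            split <;> omega
          · by_cases hs1 : s = j₁
            · rw [hs1, hB3, hst, hstJ, hlast0, single_cs_apply,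
                if_neg (fun h : j₁ = t => hJ1 (h ▸ htJ))]
              linarith only []
            · by_cases hs2 : s = j₂
              · rw [hs2, hB4, hst, hstJ, hlast0, single_cs_apply,
                  if_neg (fun h : j₂ = t => hJ2 (h ▸ htJ))]
                linarith only []
              · by_cases hs3 : s = j₃
                · rw [hs3, hB5, hst, hstJ, hlast0, single_cs_apply,
                    if_neg (fun h : j₃ = t => hJ3 (h ▸ htJ))]
                  linarith only []
                · rw [hB6 s hsJ hs1 hs2 hs3, single_cs_apply,
                    if_neg (fun h : s = t => hsJ (h ▸ htJ))]
        · rw [hB2, hst, hstJ, hlast0]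
          linarith only []
      · subst h
        exact ⟨⟨hβroot, hβpos⟩, realRoots_smul r hwαW hβroot, hβneg⟩
      · subst h
        exact ⟨⟨hβeroot j₁ hJ1, hβepos j₁⟩, realRoots_smul r hwαW (hβeroot j₁ hJ1),
          hβeneg j₁ hJ1 (Or.inl rfl)⟩
      · subst h
        exact ⟨⟨hβeroot j₂ hJ2, hβepos j₂⟩, realRoots_smul r hwαW (hβeroot j₂ hJ2),
          hβeneg j₂ hJ2 (Or.inr (Or.inl rfl))⟩
      · subst h
        exact ⟨⟨hβeroot j₃ hJ3, hβepos j₃⟩, realRoots_smul r hwαW (hβeroot j₃ hJ3),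
          hβeneg j₃ hJ3 (Or.inr (Or.inr rfl))⟩
  · -- cardinality
    have hinj : Set.InjOn (fun j : Fin r => (Pi.single j.castSucc 1 : Fin (r+1) → ℤ)) ↑J := by
      intro x _ y _ h
      by_contra hxy
      have hne : (x.castSucc : Fin (r+1)) ≠ y.castSucc := by simpa [Fin.castSucc_inj] using hxy
      have := congrFun h x.castSucc
      simp only [Pi.single_eq_same, Pi.single_eq_of_ne hne] at this
      omega
    have hb1 : β j₁.castSucc = 0 := by rw [hβcs, if_neg hJ1]
    have hb2 : β j₂.castSucc = 0 := by rw [hβcs, if_neg hJ2]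
    have hb3 : β j₃.castSucc = 0 := by rw [hβcs, if_neg hJ3]
    have d1 : β ≠ β + Pi.single j₁.castSucc 1 := fun h => by
      have := congrFun h j₁.castSucc
      rw [Pi.add_apply, Pi.single_eq_same] at this
      omega
    have d2 : β ≠ β + Pi.single j₂.castSucc 1 := fun h => by
      have := congrFun h j₂.castSucc
      rw [Pi.add_apply, Pi.single_eq_same] at this
      omega
    have d3 : β ≠ β + Pi.single j₃.castSucc 1 := fun h => by
      have := congrFun h j₃.castSucc
      rw [Pi.add_apply, Pi.single_eq_same] at this
      omega
    have e12 : β + Pi.single j₁.castSucc 1 ≠ β + Pi.single j₂.castSucc 1 := fun h => by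
      have := congrFun h j₁.castSucc
      rw [Pi.add_apply, Pi.add_apply, Pi.single_eq_same,
        Pi.single_eq_of_ne (by simpa [Fin.castSucc_inj] using h12') ] at this
      omega
    have e13 : β + Pi.single j₁.castSucc 1 ≠ β + Pi.single j₃.castSucc 1 := fun h => by
      have := congrFun h j₁.castSucc
      rw [Pi.add_apply, Pi.add_apply, Pi.single_eq_same,
        Pi.single_eq_of_ne (by simpa [Fin.castSucc_inj] using h13') ] at this
      omega
    have e23 : β + Pi.single j₂.castSucc 1 ≠ β + Pi.single j₃.castSucc 1 := fun h => by
      have := congrFun h j₂.castSucc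
      rw [Pi.add_apply, Pi.add_apply, Pi.single_eq_same,
        Pi.single_eq_of_ne (by simpa [Fin.castSucc_inj] using h23') ] at this
      omega
    have hfin1 : (({β + Pi.single j₂.castSucc 1, β + Pi.single j₃.castSucc 1}) :
        Set (Fin (r+1) → ℤ)).Finite := (Set.finite_singleton _).insert _
    have hfin2 : (({β + Pi.single j₁.castSucc 1, β + Pi.single j₂.castSucc 1,
        β + Pi.single j₃.castSucc 1}) : Set (Fin (r+1) → ℤ)).Finite := hfin1.insert _
    have hfin3 : (({β, β + Pi.single j₁.castSucc 1, β + Pi.single j₂.castSucc 1,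
        β + Pi.single j₃.castSucc 1}) : Set (Fin (r+1) → ℤ)).Finite := hfin2.insert _
    have h4 : (({β, β + Pi.single j₁.castSucc 1, β + Pi.single j₂.castSucc 1,
        β + Pi.single j₃.castSucc 1}) : Set (Fin (r+1) → ℤ)).ncard = 4 := by
      rw [Set.ncard_insert_of_notMem (by simp [d1, d2, d3]) hfin2,
        Set.ncard_insert_of_notMem (by simp [e12, e13]) hfin1,
        Set.ncard_insert_of_notMem (by simp [e23]) (Set.finite_singleton _),
        Set.ncard_singleton]
    have hdisj : Disjoint
        ((fun j : Fin r => (Pi.single j.castSucc 1 : Fin (r+1) → ℤ)) '' ↑J)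
        ({β, β + Pi.single j₁.castSucc 1, β + Pi.single j₂.castSucc 1,
          β + Pi.single j₃.castSucc 1} : Set (Fin (r+1) → ℤ)) := by
      rw [Set.disjoint_left]
      rintro x ⟨t, -, rfl⟩ hx
      have hlast0 : (Pi.single t.castSucc (1:ℤ) : Fin (r+1) → ℤ) (Fin.last r) = 0 :=
        single_cs_last r t
      have hβe : ∀ jx : Fin r, (β + Pi.single jx.castSucc 1 : Fin (r+1) → ℤ) (Fin.last r) = 1 := by
        intro jx
        rw [Pi.add_apply, hβlast, single_cs_last]
        norm_num
      rcases hx with h | h | h | h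
      · have h' : (Pi.single t.castSucc 1 : Fin (r+1) → ℤ) = β := h
        rw [h', hβlast] at hlast0; omega
      · have h' : (Pi.single t.castSucc 1 : Fin (r+1) → ℤ) = β + Pi.single j₁.castSucc 1 := h
        rw [h', hβe j₁] at hlast0; omega
      · have h' : (Pi.single t.castSucc 1 : Fin (r+1) → ℤ) = β + Pi.single j₂.castSucc 1 := h
        rw [h', hβe j₂] at hlast0; omega
      · have h' : (Pi.single t.castSucc 1 : Fin (r+1) → ℤ) = β + Pi.single j₃.castSucc 1 := h
        rw [h', hβe j₃] at hlast0; omega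
    rw [Set.ncard_union_eq hdisj ((J.finite_toSet).image _) hfin3,
      Set.ncard_image_of_injOn hinj, Set.ncard_coe_finset, h4]
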